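/- Let H be a complex Hilbert space, n ≥ 0, and h ∈ H. The creation and annihilation operators satisfy the canonical commutation relation a_{n+2}(h) a_{n+1}†(h) − a_n†(h) a_{n+1}(h) = ‖h‖² I on H^{⊙(n+1)}. -/

import Mathlib

open scoped InnerProductSpace

/-- An abstract presentation of the `n`-fold Hilbert tensor power of `H`:
a Hilbert space `Hn` together with a map `emb` sending `(x 1, …, x n)` to the
elementary tensor `x 1 ⊗ ⋯ ⊗ x n`, such that inner products of elementary
tensors multiply and the elementary tensors span a dense subspace. -/
structure TensorPowerStructure (H Hn : Type*) [NormedAddCommGroup H]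
    [InnerProductSpace ℂ H] [NormedAddCommGroup Hn] [InnerProductSpace ℂ Hn]
    (n : ℕ) where
  emb : (Fin n → H) → Hn
  inner_emb : ∀ x y : Fin n → H, ⟪emb x, emb y⟫_ℂ = ∏ i, ⟪x i, y i⟫_ℂ
  dense_span : Dense ((Submodule.span ℂ (Set.range emb) : Submodule ℂ Hn) : Set Hn)

/-- `Tn` is the `n`-fold tensor power `T^{⊗n}` of `T`, acting as `T` on each
factor of elementary tensors. -/
def IsTensorPowerOp {H Hn : Type*} [NormedAddCommGroup H] [InnerProductSpace ℂ H]
    [NormedAddCommGroup Hn] [InnerProductSpace ℂ Hn] {n : ℕ}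
    (tp : TensorPowerStructure H Hn n) (T : H →L[ℂ] H) (Tn : Hn →L[ℂ] Hn) : Prop :=
  ∀ x : Fin n → H, Tn (tp.emb x) = tp.emb fun i => T (x i)

/-- The symmetric subspace `H^{⊙n}` of the Hilbert tensor power `H^{⊗n}`: the
closed subspace spanned by the symmetric tensors `Σ_{σ ∈ Sₙ} x_{σ(1)} ⊗ ⋯ ⊗ x_{σ(n)}`. -/
def symSubspace {H Hn : Type*} [NormedAddCommGroup H] [InnerProductSpace ℂ H]
    [NormedAddCommGroup Hn] [InnerProductSpace ℂ Hn] {n : ℕ}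
    (tp : TensorPowerStructure H Hn n) : Submodule ℂ Hn :=
  (Submodule.span ℂ
    {y : Hn | ∃ x : Fin n → H,
      y = ∑ σ : Equiv.Perm (Fin n), tp.emb (x ∘ σ)}).topologicalClosure

/-- `C` is the creation operator `aₙ†(h) : H^{⊙n} → H^{⊙(n+1)}`, determined by
`aₙ†(h) (Σ_σ g_{σ(1)} ⊗ ⋯ ⊗ g_{σ(n)}) = (n+1)^{-1/2} Σ_σ Σ_m g_{σ(1)} ⊗ ⋯ ⊗ h ⊗ ⋯ ⊗ g_{σ(n)}`
(inserting `h` in the `m`-th slot). -/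
def IsCreationOp {H Hn Hm : Type*} [NormedAddCommGroup H] [InnerProductSpace ℂ H]
    [NormedAddCommGroup Hn] [InnerProductSpace ℂ Hn]
    [NormedAddCommGroup Hm] [InnerProductSpace ℂ Hm] {n : ℕ}
    (tpn : TensorPowerStructure H Hn n) (tpm : TensorPowerStructure H Hm (n + 1))
    (h : H) (C : ↥(symSubspace tpn) →L[ℂ] ↥(symSubspace tpm)) : Prop :=
  ∀ (g : Fin n → H) (x : symSubspace tpn),
    (x : Hn) = (∑ σ : Equiv.Perm (Fin n), tpn.emb (g ∘ σ)) →
    ((C x : Hm)) = (Real.sqrt (n + 1))⁻¹ •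
      ∑ σ : Equiv.Perm (Fin n), ∑ m : Fin (n + 1),
        tpm.emb (m.insertNth h (g ∘ σ))

/-- `A` is the annihilation operator `a_{n+1}(h) : H^{⊙(n+1)} → H^{⊙n}`, determined by
`a_{n+1}(h)(Σ_σ g_{σ(1)} ⊗ ⋯ ⊗ g_{σ(n+1)}) = (n+1)^{-1/2} Σ_σ Σ_m [g_{σ(m)}, h] g_{σ(1)} ⊗ ⋯ ĝ_{σ(m)} ⋯ ⊗ g_{σ(n+1)}`
(omitting the `m`-th factor). -/
def IsAnnihilationOp {H Hn Hm : Type*} [NormedAddCommGroup H] [InnerProductSpace ℂ H]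
    [NormedAddCommGroup Hn] [InnerProductSpace ℂ Hn]
    [NormedAddCommGroup Hm] [InnerProductSpace ℂ Hm] {n : ℕ}
    (tpm : TensorPowerStructure H Hm (n + 1)) (tpn : TensorPowerStructure H Hn n)
    (h : H) (A : ↥(symSubspace tpm) →L[ℂ] ↥(symSubspace tpn)) : Prop :=
  ∀ (g : Fin (n + 1) → H) (x : symSubspace tpm),
    (x : Hm) = (∑ σ : Equiv.Perm (Fin (n + 1)), tpm.emb (g ∘ σ)) →
    ((A x : Hn)) = (Real.sqrt (n + 1))⁻¹ •
      ∑ σ : Equiv.Perm (Fin (n + 1)), ∑ m : Fin (n + 1),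
        ⟪h, g (σ m)⟫_ℂ • tpn.emb (fun i => g (σ (m.succAbove i)))


section Aux

open Equiv Finset

/-- The permutation of `Fin (k+1)` sending `m` to `p` and `m.succAbove j` to
`p.succAbove (ρ j)`. -/
def permInsert {k : ℕ} (m p : Fin (k + 1)) (ρ : Equiv.Perm (Fin k)) :
    Equiv.Perm (Fin (k + 1)) :=
  (finSuccEquiv' m).trans ((Equiv.optionCongr ρ).trans (finSuccEquiv' p).symm)

@[simp] lemma permInsert_self {k : ℕ} (m p : Fin (k + 1)) (ρ : Equiv.Perm (Fin k)) :
    permInsert m p ρ m = p := by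
  simp [permInsert, finSuccEquiv'_at]

@[simp] lemma permInsert_succAbove {k : ℕ} (m p : Fin (k + 1)) (ρ : Equiv.Perm (Fin k))
    (j : Fin k) : permInsert m p ρ (m.succAbove j) = p.succAbove (ρ j) := by
  simp [permInsert, finSuccEquiv'_succAbove, finSuccEquiv'_symm_some]

lemma permInsert_bijective {k : ℕ} (m : Fin (k + 1)) :
    Function.Bijective (fun pr : Fin (k + 1) × Equiv.Perm (Fin k) =>
      permInsert m pr.1 pr.2) := by
  rw [Fintype.bijective_iff_injective_and_card]
  constructor
  · rintro ⟨p, ρ⟩ ⟨p', ρ'⟩ hpr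
    have hp : p = p' := by
      simpa using congrArg (fun τ : Equiv.Perm (Fin (k+1)) => τ m) hpr
    subst hp
    refine Prod.ext rfl (Equiv.ext fun j => ?_)
    have := congrArg (fun τ : Equiv.Perm (Fin (k+1)) => τ (m.succAbove j)) hpr
    simpa using Fin.succAbove_right_injective (p := p) (by simpa using this)
  · simp [Fintype.card_perm, Nat.factorial_succ, mul_comm]

lemma sum_perm_decomp {k : ℕ} {M : Type*} [AddCommMonoid M] (m : Fin (k + 1))
    (F : Equiv.Perm (Fin (k + 1)) → M) :
    ∑ τ : Equiv.Perm (Fin (k + 1)), F τ =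
      ∑ p : Fin (k + 1), ∑ ρ : Equiv.Perm (Fin k), F (permInsert m p ρ) := by
  calc ∑ τ : Equiv.Perm (Fin (k + 1)), F τ
      = ∑ pr : Fin (k + 1) × Equiv.Perm (Fin k), F (permInsert m pr.1 pr.2) :=
        (Fintype.sum_bijective _ (permInsert_bijective m)
          (fun pr => F (permInsert m pr.1 pr.2)) F (fun _ => rfl)).symm
    _ = ∑ p : Fin (k + 1), ∑ ρ : Equiv.Perm (Fin k), F (permInsert m p ρ) :=
        Fintype.sum_prod_type _

lemma sum_perm_inv {α : Type*} [DecidableEq α] [Fintype α] {M : Type*} [AddCommMonoid M]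
    (f : Equiv.Perm α → M) : ∑ τ : Equiv.Perm α, f τ⁻¹ = ∑ τ : Equiv.Perm α, f τ :=
  Fintype.sum_bijective Inv.inv (Equiv.inv (Equiv.Perm α)).bijective _ _ (fun _ => rfl)

lemma sum_cons_decomp {k : ℕ} {H M : Type*} [AddCommMonoid M]
    (e : (Fin (k + 1) → H) → M) (h : H) (g : Fin k → H) :
    ∑ τ : Equiv.Perm (Fin (k + 1)), e (Fin.cons h g ∘ τ) =
      ∑ p : Fin (k + 1), ∑ ρ : Equiv.Perm (Fin k), e (p.insertNth h (g ∘ ρ)) := by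
  rw [← sum_perm_inv (fun τ => e (Fin.cons h g ∘ τ)),
    sum_perm_decomp (0 : Fin (k + 1)) (fun τ : Equiv.Perm (Fin (k+1)) => e (Fin.cons h g ∘ ⇑τ⁻¹))]
  refine Finset.sum_congr rfl fun p _ => ?_
  rw [← sum_perm_inv (fun ρ => e (p.insertNth h (g ∘ ρ)))]
  refine Finset.sum_congr rfl fun ρ _ => ?_
  congr 1
  funext i
  obtain ⟨t, rfl⟩ := (permInsert 0 p ρ).surjective i
  rw [Function.comp_apply, Equiv.Perm.inv_def, Equiv.symm_apply_apply]
  induction t using Fin.cases with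
  | zero => simp
  | succ j =>
    have : permInsert 0 p ρ j.succ = p.succAbove (ρ j) := by
      simpa using permInsert_succAbove 0 p ρ j
    rw [this, Fin.insertNth_apply_succAbove]
    simp

lemma real_smul_eq {V : Type*} [AddCommGroup V] [Module ℂ V] [Module ℝ V]
    [IsScalarTower ℝ ℂ V] (r : ℝ) (v : V) : r • v = (r : ℂ) • v := by
  rw [← algebraMap_smul ℂ r v, Complex.coe_algebraMap]

lemma mem_symSubspace {H Hk : Type*} [NormedAddCommGroup H] [InnerProductSpace ℂ H]
    [NormedAddCommGroup Hk] [InnerProductSpace ℂ Hk] {k : ℕ}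
    (tp : TensorPowerStructure H Hk k) (g : Fin k → H) :
    (∑ σ : Equiv.Perm (Fin k), tp.emb (g ∘ σ)) ∈ symSubspace tp :=
  Submodule.le_topologicalClosure _ (Submodule.subset_span ⟨g, rfl⟩)

lemma key_commutation
    {H Hn Hm Hl : Type*} [NormedAddCommGroup H] [InnerProductSpace ℂ H]
    [NormedAddCommGroup Hn] [InnerProductSpace ℂ Hn]
    [NormedAddCommGroup Hm] [InnerProductSpace ℂ Hm]
    [NormedAddCommGroup Hl] [InnerProductSpace ℂ Hl]
    {n : ℕ} (tpn : TensorPowerStructure H Hn n)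
    (tpm : TensorPowerStructure H Hm (n + 1))
    (tpl : TensorPowerStructure H Hl (n + 2)) (h : H)
    (C₁ : ↥(symSubspace tpn) →L[ℂ] ↥(symSubspace tpm))
    (A₁ : ↥(symSubspace tpm) →L[ℂ] ↥(symSubspace tpn))
    (C₂ : ↥(symSubspace tpm) →L[ℂ] ↥(symSubspace tpl))
    (A₂ : ↥(symSubspace tpl) →L[ℂ] ↥(symSubspace tpm))
    (hC₁ : IsCreationOp tpn tpm h C₁) (hA₁ : IsAnnihilationOp tpm tpn h A₁)
    (hC₂ : IsCreationOp tpm tpl h C₂) (hA₂ : IsAnnihilationOp tpl tpm h A₂)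
    (g : Fin (n + 1) → H) (x : ↥(symSubspace tpm))
    (hx : (x : Hm) = ∑ σ : Equiv.Perm (Fin (n + 1)), tpm.emb (g ∘ σ)) :
    ((A₂ (C₂ x) : Hm)) - ((C₁ (A₁ x) : Hm)) = ((‖h‖ : ℂ) ^ 2) • (x : Hm) := by
  classical
  -- scalars
  set e : ℝ := Real.sqrt (↑(n + 1) + 1) with he_def
  set d : ℝ := Real.sqrt (↑n + 1) with hd_def
  have hepos : (0:ℝ) < e := Real.sqrt_pos.mpr (by positivity)
  have hdpos : (0:ℝ) < d := Real.sqrt_pos.mpr (by positivity)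
  have he2 : ((e : ℂ))⁻¹ * ((e : ℂ))⁻¹ * ((n : ℂ) + 2) = 1 := by
    have h1 : e * e = ↑(n+1) + 1 := Real.mul_self_sqrt (by positivity)
    have h2 : ((e : ℂ)) ≠ 0 := by
      simpa using ne_of_gt hepos
    field_simp
    rw [sq, ← Complex.ofReal_mul, h1]
    push_cast
    ring
  have hd2 : ((d : ℂ))⁻¹ * ((n : ℂ) + 1) * ((d : ℂ))⁻¹ = 1 := by
    have h1 : d * d = ↑n + 1 := Real.mul_self_sqrt (by positivity)
    have h2 : ((d : ℂ)) ≠ 0 := by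
      simpa using ne_of_gt hdpos
    field_simp
    rw [sq, ← Complex.ofReal_mul, h1]
    push_cast
    ring
  -- the fully symmetrized (n+2)-tensor built from h and g
  set Y : ↥(symSubspace tpl) :=
    ⟨∑ τ : Equiv.Perm (Fin (n + 2)), tpl.emb (Fin.cons h g ∘ τ),
      mem_symSubspace tpl (Fin.cons h g)⟩ with hY_def
  have hC2x : C₂ x = ((e⁻¹ : ℝ) : ℂ) • Y := by
    apply Subtype.ext
    show (C₂ x : Hl) = ((e⁻¹ : ℝ) : ℂ) • (Y : Hl)
    rw [hC₂ g x hx, real_smul_eq, ← he_def]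
    congr 1
    show _ = ∑ τ : Equiv.Perm (Fin (n + 2)), tpl.emb (Fin.cons h g ∘ τ)
    rw [sum_cons_decomp tpl.emb h g, Finset.sum_comm]
  have hA2Y := hA₂ (Fin.cons h g) Y rfl
  rw [← he_def] at hA2Y
  have hS : (∑ τ : Equiv.Perm (Fin (n + 2)), ∑ m : Fin (n + 2),
        ⟪h, (Fin.cons h g : Fin (n + 2) → H) (τ m)⟫_ℂ • tpm.emb fun i => (Fin.cons h g : Fin (n + 2) → H) (τ (m.succAbove i)))
      = ((n : ℂ) + 2) • ∑ p : Fin (n + 2), ∑ ρ : Equiv.Perm (Fin (n + 1)),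
          ⟪h, (Fin.cons h g : Fin (n + 2) → H) p⟫_ℂ • tpm.emb fun i => (Fin.cons h g : Fin (n + 2) → H) (p.succAbove (ρ i)) := by
    rw [Finset.sum_comm]
    have hm : ∀ m : Fin (n + 2),
        (∑ τ : Equiv.Perm (Fin (n + 2)), ⟪h, (Fin.cons h g : Fin (n + 2) → H) (τ m)⟫_ℂ •
          tpm.emb fun i => (Fin.cons h g : Fin (n + 2) → H) (τ (m.succAbove i)))
        = ∑ p : Fin (n + 2), ∑ ρ : Equiv.Perm (Fin (n + 1)),
            ⟪h, (Fin.cons h g : Fin (n + 2) → H) p⟫_ℂ • tpm.emb fun i => (Fin.cons h g : Fin (n + 2) → H) (p.succAbove (ρ i)) := by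
      intro m
      rw [sum_perm_decomp m (fun τ : Equiv.Perm (Fin (n + 2)) => ⟪h, (Fin.cons h g : Fin (n + 2) → H) (τ m)⟫_ℂ •
        tpm.emb fun i => (Fin.cons h g : Fin (n + 2) → H) (τ (m.succAbove i)))]
      simp only [permInsert_self, permInsert_succAbove]
    rw [Finset.sum_congr rfl (fun m _ => hm m), Finset.sum_const, Finset.card_univ,
      Fintype.card_fin, ← Nat.cast_smul_eq_nsmul ℂ]
    norm_num
  have hACx : (A₂ (C₂ x) : Hm) = ∑ p : Fin (n + 2), ⟪h, (Fin.cons h g : Fin (n + 2) → H) p⟫_ℂ •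
      ∑ ρ : Equiv.Perm (Fin (n + 1)), tpm.emb fun i => (Fin.cons h g : Fin (n + 2) → H) (p.succAbove (ρ i)) := by
    have hcoe : (A₂ (C₂ x) : Hm) = ((e⁻¹ : ℝ) : ℂ) • ((A₂ Y : Hm)) := by
      rw [hC2x, map_smul]
      rfl
    rw [hcoe, hA2Y, real_smul_eq, hS, smul_smul, smul_smul]
    push_cast
    rw [he2, one_smul]
    simp only [Finset.smul_sum]
  -- split off the p = 0 term
  have hsplit : (A₂ (C₂ x) : Hm) = ((‖h‖ : ℂ) ^ 2) • (x : Hm) +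
      ∑ q : Fin (n + 1), ⟪h, g q⟫_ℂ •
        ∑ p' : Fin (n + 1), ∑ ρ' : Equiv.Perm (Fin n),
          tpm.emb (p'.insertNth h ((fun j => g (q.succAbove j)) ∘ ρ')) := by
    rw [hACx, Fin.sum_univ_succ]
    congr 1
    · have h0 : ∀ ρ : Equiv.Perm (Fin (n + 1)),
          (fun i => (Fin.cons h g : Fin (n + 2) → H) ((0 : Fin (n + 2)).succAbove (ρ i))) = g ∘ ρ := by
        intro ρ; funext i; simp
      rw [Finset.sum_congr rfl (fun ρ _ => by rw [h0 ρ]), ← hx]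
      simp [inner_self_eq_norm_sq_to_K]
    · refine Finset.sum_congr rfl fun q _ => ?_
      have hfun : ∀ ρ : Equiv.Perm (Fin (n + 1)),
          (fun i => (Fin.cons h g : Fin (n + 2) → H) ((Fin.succ q).succAbove (ρ i)))
            = Fin.cons h (fun j => g (q.succAbove j)) ∘ ρ := by
        intro ρ; funext i
        rw [Function.comp_apply]
        generalize ρ i = t
        induction t using Fin.cases with
        | zero => simp
        | succ j => rw [Fin.succ_succAbove_succ, Fin.cons_succ, Fin.cons_succ]
      rw [Fin.cons_succ]
      congr 1
      rw [Finset.sum_congr rfl (fun ρ _ => by rw [hfun ρ]),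
        sum_cons_decomp tpm.emb h (fun j => g (q.succAbove j))]
  -- now the C₁ A₁ side
  set Z : Fin (n + 1) → ↥(symSubspace tpn) := fun p =>
    ⟨∑ ρ : Equiv.Perm (Fin n), tpn.emb ((fun j => g (p.succAbove j)) ∘ ρ),
      mem_symSubspace tpn (fun j => g (p.succAbove j))⟩ with hZ_def
  have hS1 : (∑ σ : Equiv.Perm (Fin (n + 1)), ∑ m : Fin (n + 1),
        ⟪h, g (σ m)⟫_ℂ • tpn.emb fun i => g (σ (m.succAbove i)))
      = ((n : ℂ) + 1) • ∑ p : Fin (n + 1), ⟪h, g p⟫_ℂ • (Z p : Hn) := by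
    rw [Finset.sum_comm]
    have hm : ∀ m : Fin (n + 1),
        (∑ σ : Equiv.Perm (Fin (n + 1)), ⟪h, g (σ m)⟫_ℂ •
          tpn.emb fun i => g (σ (m.succAbove i)))
        = ∑ p : Fin (n + 1), ⟪h, g p⟫_ℂ • (Z p : Hn) := by
      intro m
      rw [sum_perm_decomp m (fun σ : Equiv.Perm (Fin (n + 1)) => ⟪h, g (σ m)⟫_ℂ •
        tpn.emb fun i => g (σ (m.succAbove i)))]
      refine Finset.sum_congr rfl fun p _ => ?_
      simp only [permInsert_self, permInsert_succAbove]
      rw [← Finset.smul_sum]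
      rfl
    rw [Finset.sum_congr rfl (fun m _ => hm m), Finset.sum_const, Finset.card_univ,
      Fintype.card_fin, ← Nat.cast_smul_eq_nsmul ℂ]
    norm_num
  have hA1x : A₁ x = ∑ p : Fin (n + 1),
      (((d⁻¹ : ℝ) : ℂ) * ((n : ℂ) + 1) * ⟪h, g p⟫_ℂ) • Z p := by
    apply Subtype.ext
    show (A₁ x : Hn) = _
    rw [hA₁ g x hx, real_smul_eq, ← hd_def, hS1, smul_smul]
    push_cast
    rw [Finset.smul_sum]
    simp only [smul_smul]
  have hCA : (C₁ (A₁ x) : Hm) = ∑ p : Fin (n + 1), ⟪h, g p⟫_ℂ •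
      ∑ p' : Fin (n + 1), ∑ ρ : Equiv.Perm (Fin n),
        tpm.emb (p'.insertNth h ((fun j => g (p.succAbove j)) ∘ ρ)) := by
    rw [hA1x, map_sum]
    rw [show ((∑ p : Fin (n + 1),
        C₁ ((((d⁻¹ : ℝ) : ℂ) * ((n : ℂ) + 1) * ⟪h, g p⟫_ℂ) • Z p) : ↥(symSubspace tpm)) : Hm)
      = ∑ p : Fin (n + 1),
          ((C₁ ((((d⁻¹ : ℝ) : ℂ) * ((n : ℂ) + 1) * ⟪h, g p⟫_ℂ) • Z p) : ↥(symSubspace tpm)) : Hm)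
      by push_cast; rfl]
    refine Finset.sum_congr rfl fun p _ => ?_
    rw [map_smul]
    have hCZ := hC₁ (fun j => g (p.succAbove j)) (Z p) rfl
    have hcoe3 : (((((d⁻¹ : ℝ) : ℂ) * ((n : ℂ) + 1) * ⟪h, g p⟫_ℂ) •
        C₁ (Z p) : ↥(symSubspace tpm)) : Hm)
      = (((d⁻¹ : ℝ) : ℂ) * ((n : ℂ) + 1) * ⟪h, g p⟫_ℂ) • (C₁ (Z p) : Hm) := rfl
    rw [hcoe3, hCZ, real_smul_eq, ← hd_def, smul_smul]
    rw [show (((d⁻¹ : ℝ) : ℂ) * ((n : ℂ) + 1) * ⟪h, g p⟫_ℂ * ((d⁻¹ : ℝ) : ℂ))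
      = (((d : ℂ))⁻¹ * ((n : ℂ) + 1) * ((d : ℂ))⁻¹) * ⟪h, g p⟫_ℂ by push_cast; ring]
    rw [hd2, one_mul]
    congr 1
    exact Finset.sum_comm
  rw [hsplit, hCA]
  exact add_sub_cancel_right _ _

end Aux

/-- The canonical commutation relation
`a_{n+2}(h) a_{n+1}†(h) − aₙ†(h) a_{n+1}(h) = ‖h‖² I` on `H^{⊙(n+1)}`. -/
theorem creation_annihilation_commutation
    {H Hn Hm Hl : Type*} [NormedAddCommGroup H] [InnerProductSpace ℂ H] [CompleteSpace H]
    [NormedAddCommGroup Hn] [InnerProductSpace ℂ Hn] [CompleteSpace Hn]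
    [NormedAddCommGroup Hm] [InnerProductSpace ℂ Hm] [CompleteSpace Hm]
    [NormedAddCommGroup Hl] [InnerProductSpace ℂ Hl] [CompleteSpace Hl]
    {n : ℕ} (tpn : TensorPowerStructure H Hn n)
    (tpm : TensorPowerStructure H Hm (n + 1))
    (tpl : TensorPowerStructure H Hl (n + 2)) (h : H)
    (C₁ : ↥(symSubspace tpn) →L[ℂ] ↥(symSubspace tpm))
    (A₁ : ↥(symSubspace tpm) →L[ℂ] ↥(symSubspace tpn))
    (C₂ : ↥(symSubspace tpm) →L[ℂ] ↥(symSubspace tpl))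
    (A₂ : ↥(symSubspace tpl) →L[ℂ] ↥(symSubspace tpm))
    (hC₁ : IsCreationOp tpn tpm h C₁) (hA₁ : IsAnnihilationOp tpm tpn h A₁)
    (hC₂ : IsCreationOp tpm tpl h C₂) (hA₂ : IsAnnihilationOp tpl tpm h A₂) :
    ∀ x : symSubspace tpm, A₂ (C₂ x) - C₁ (A₁ x) = ((‖h‖ : ℂ) ^ 2) • x := by
  classical
  set T : ↥(symSubspace tpm) →L[ℂ] ↥(symSubspace tpm) :=
    A₂.comp C₂ - C₁.comp A₁ -
      ((‖h‖ : ℂ) ^ 2) • ContinuousLinearMap.id ℂ ↥(symSubspace tpm) with hT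
  have hgen : ∀ x : ↥(symSubspace tpm), (∃ g : Fin (n + 1) → H,
      (x : Hm) = ∑ σ : Equiv.Perm (Fin (n + 1)), tpm.emb (g ∘ σ)) → T x = 0 := by
    rintro x ⟨g, hg⟩
    have hk := key_commutation tpn tpm tpl h C₁ A₁ C₂ A₂ hC₁ hA₁ hC₂ hA₂ g x hg
    apply Subtype.ext
    show ((T x : ↥(symSubspace tpm)) : Hm) = 0
    have : ((T x : ↥(symSubspace tpm)) : Hm)
        = ((A₂ (C₂ x) : Hm)) - ((C₁ (A₁ x) : Hm)) - ((‖h‖ : ℂ) ^ 2) • (x : Hm) := by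
      simp [hT, ContinuousLinearMap.sub_apply, ContinuousLinearMap.smul_apply,
        ContinuousLinearMap.comp_apply]
    rw [this, hk, sub_self]
  set N : Submodule ℂ ↥(symSubspace tpm) := Submodule.span ℂ {x : ↥(symSubspace tpm) | ∃ g : Fin (n + 1) → H,
    (x : Hm) = ∑ σ : Equiv.Perm (Fin (n + 1)), tpm.emb (g ∘ σ)} with hN
  have hNker : ∀ x ∈ N, T x = 0 := by
    intro x hxN
    have : N ≤ LinearMap.ker (T : ↥(symSubspace tpm) →ₗ[ℂ] ↥(symSubspace tpm)) := by
      rw [hN, Submodule.span_le]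
      intro y hy
      exact LinearMap.mem_ker.mpr (hgen y hy)
    exact LinearMap.mem_ker.mp (this hxN)
  have hmap : Submodule.map (symSubspace tpm).subtype N
      = Submodule.span ℂ {y : Hm | ∃ g : Fin (n + 1) → H,
          y = ∑ σ : Equiv.Perm (Fin (n + 1)), tpm.emb (g ∘ σ)} := by
    rw [hN, Submodule.map_span]
    congr 1
    ext y
    constructor
    · rintro ⟨x, ⟨g, hg⟩, rfl⟩
      exact ⟨g, hg⟩
    · rintro ⟨g, rfl⟩
      exact ⟨⟨_, mem_symSubspace tpm g⟩, ⟨g, rfl⟩, rfl⟩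
  have hdense : Dense (N : Set ↥(symSubspace tpm)) := by
    intro x
    have hx2 : (x : Hm) ∈ closure ((Submodule.span ℂ {y : Hm | ∃ g : Fin (n + 1) → H,
        y = ∑ σ : Equiv.Perm (Fin (n + 1)), tpm.emb (g ∘ σ)} : Submodule ℂ Hm) : Set Hm) := by
      exact x.2
    obtain ⟨u, hu, hlim⟩ := mem_closure_iff_seq_limit.mp hx2
    have hw : ∀ k, ∃ w : ↥(symSubspace tpm), w ∈ N ∧ (w : Hm) = u k := by
      intro k
      have : u k ∈ Submodule.map (symSubspace tpm).subtype N := by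
        rw [hmap]; exact hu k
      obtain ⟨w, hwN, hwu⟩ := this
      exact ⟨w, hwN, hwu⟩
    choose w hwN hwu using hw
    refine mem_closure_iff_seq_limit.mpr ⟨w, hwN, ?_⟩
    rw [Topology.IsEmbedding.subtypeVal.tendsto_nhds_iff]
    have hcw : Subtype.val ∘ w = u := funext hwu
    rw [hcw]
    exact hlim
  have hTzero : (T : ↥(symSubspace tpm) → ↥(symSubspace tpm)) = fun _ => (0 : ↥(symSubspace tpm)) :=
    Continuous.ext_on hdense T.continuous continuous_const (fun y hy => hNker y hy)
  intro x
  have hx : T x = 0 := congrFun hTzero x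
  have : A₂ (C₂ x) - C₁ (A₁ x) - ((‖h‖ : ℂ) ^ 2) • x = 0 := by
    rw [← hx]
    simp [hT, ContinuousLinearMap.sub_apply, ContinuousLinearMap.smul_apply,
      ContinuousLinearMap.comp_apply]
  exact sub_eq_zero.mp this
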